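/- arXiv:2505.00481 — 4 statements merged into one kernel-verified Lean document; each statement's English description precedes it below -/
import Mathlib

section
/- Let D(z) and N(z) be coprime real polynomials with n = deg(D) ≥ 1 and deg(N) < n. For any real polynomial γ(z) of degree 2n, there exist polynomials D_c(z) and N_c(z) such that D_c(z)·D(z) + N_c(z)·N(z) = γ(z), deg(N_c) < n, and deg(D_c) = n. -/
open Polynomial

theorem pole_placement (D N γ : ℝ[X]) (n : ℕ) (hco : IsCoprime D N)
    (hn : 1 ≤ n) (hD : D.degree = n) (hN : N.degree < n) (hγ : γ.degree = 2 * n) :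
    ∃ Dc Nc : ℝ[X],
      Dc * D + Nc * N = γ ∧ Nc.degree < n ∧ Dc.degree = n := by
  obtain ⟨a, b, hab⟩ := hco
  have hD0 : D ≠ 0 := by
    intro h; rw [h, degree_zero] at hD
    exact absurd hD.symm (by simp)
  set Nc : ℝ[X] := γ * b % D with hNc
  set Dc : ℝ[X] := γ * a + (γ * b / D) * N with hDc
  have hdm : D * (γ * b / D) + Nc = γ * b := EuclideanDomain.div_add_mod _ _
  have heq : Dc * D + Nc * N = γ := by
    have : Dc * D + Nc * N = (a * D + b * N) * γ := by
      rw [hDc]; linear_combination N * hdm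
    rw [this, hab, one_mul]
  have hNclt : Nc.degree < (n : WithBot ℕ) := by
    have h : (γ * b % D).degree < D.degree := EuclideanDomain.mod_lt (γ * b) hD0
    rwa [hD] at h
  refine ⟨Dc, Nc, heq, hNclt, ?_⟩
  -- degree of Nc * N < 2n
  have hprod : (Nc * N).degree < ((2 * n : ℕ) : WithBot ℕ) := by
    rcases eq_or_ne (Nc * N) 0 with h | h
    · rw [h, degree_zero]; exact WithBot.bot_lt_coe _
    · have hNc0 : Nc ≠ 0 := fun hh => h (by rw [hh, zero_mul])
      have hN0 : N ≠ 0 := fun hh => h (by rw [hh, mul_zero])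
      rw [degree_mul, degree_eq_natDegree hNc0, degree_eq_natDegree hN0]
      rw [← Nat.cast_add, Nat.cast_lt]
      have h1 : Nc.natDegree < n := by
        rwa [degree_eq_natDegree hNc0, Nat.cast_lt] at hNclt
      have h2 : N.natDegree < n := by
        rwa [degree_eq_natDegree hN0, Nat.cast_lt] at hN
      omega
  have hDcD : (Dc * D).degree = ((2 * n : ℕ) : WithBot ℕ) := by
    have h2 : γ.degree = ((2 * n : ℕ) : WithBot ℕ) := by rw [hγ]; push_cast; ring
    have : Dc * D = γ - Nc * N := by linear_combination heq
    rw [this, degree_sub_eq_left_of_degree_lt (by rw [h2]; exact hprod), h2]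
  rw [degree_mul, hD] at hDcD
  have h2n : ((2 * n : ℕ) : WithBot ℕ) = (n : WithBot ℕ) + (n : WithBot ℕ) := by
    rw [← Nat.cast_add]; norm_num; ring
  rw [h2n] at hDcD
  exact WithBot.add_right_cancel (by exact WithBot.coe_ne_bot) hDcD
end

section
/- Let N_p(z) be a real polynomial with N_p(0) ≠ 0 and deg(N_p) ≤ n. For x ∈ ℝⁿ, let p_x(z) = zⁿ + x_{n-1}z^{n-1} + ... + x_0, and define Δ(x) = Δ₁(x) − P₁P₂⁻¹Δ₂(x), where [Δ₁(x); Δ₂(x)] = T_n(p_x) and [P₁; P₂] = T_n(N_p) are the 2n×n banded Toeplitz coefficient matrices split into top and bottom n×n blocks. Then Δ(x) is invertible if and only if p_x(z) and N_p(z) are coprime. -/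
open Polynomial

/-- The monic degree-`n` polynomial with coefficient vector `x`. -/
noncomputable def pX {n : ℕ} (x : Fin n → ℝ) : ℝ[X] :=
  X ^ n + ∑ i : Fin n, C (x i) * X ^ (i : ℕ)

/-- The `2n × n` banded Toeplitz matrix of the coefficients of `a`:
entry `(i, j)` equals `a_{n + j - i}` (zero when `i > n + j`). -/
noncomputable def Tmat (n : ℕ) (a : ℝ[X]) : Matrix (Fin (2 * n)) (Fin n) ℝ :=
  fun i j => if (i : ℕ) ≤ n + j then a.coeff (n + j - i) else 0

/-- Top `n × n` block. -/
noncomputable def topBlock (n : ℕ) (a : ℝ[X]) : Matrix (Fin n) (Fin n) ℝ :=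
  fun i j => Tmat n a ⟨i.1, by omega⟩ j

/-- Bottom `n × n` block. -/
noncomputable def botBlock (n : ℕ) (a : ℝ[X]) : Matrix (Fin n) (Fin n) ℝ :=
  fun i j => Tmat n a ⟨n + i.1, by omega⟩ j


noncomputable def phiP (n : ℕ) (c : Fin n → ℝ) : ℝ[X] :=
  ∑ j : Fin n, C (c j) * X ^ (n - 1 - (j : ℕ))

lemma coeff_phiP (n : ℕ) (c : Fin n → ℝ) (k : ℕ) :
    (phiP n c).coeff k = if h : k < n then c ⟨n - 1 - k, by omega⟩ else 0 := by
  unfold phiP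
  rw [finset_sum_coeff]
  simp only [coeff_C_mul, coeff_X_pow]
  split_ifs with h
  · rw [Finset.sum_eq_single (⟨n - 1 - k, by omega⟩ : Fin n)]
    · rw [if_pos (by simp only [Fin.val_mk]; omega), mul_one]
    · intro b _ hb
      rw [if_neg, mul_zero]
      intro hc
      have hb2 := b.isLt
      exact hb (Fin.ext (by simp only [Fin.val_mk]; omega))
    · simp
  · apply Finset.sum_eq_zero
    intro b _
    rw [if_neg (by have := b.isLt; omega), mul_zero]

lemma degree_phiP_lt (n : ℕ) (c : Fin n → ℝ) : (phiP n c).degree < (n : ℕ) := by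
  apply lt_of_le_of_lt (degree_sum_le _ _)
  refine (Finset.sup_lt_iff (WithBot.bot_lt_coe n)).mpr ?_
  intro j _
  refine lt_of_le_of_lt (degree_C_mul_X_pow_le _ _) ?_
  simp only [Nat.cast_withBot]
  exact WithBot.coe_lt_coe.mpr (by have := j.isLt; omega)

lemma phiP_eq (n : ℕ) (u : ℝ[X]) (hu : u.degree < (n : ℕ)) :
    phiP n (fun j => u.coeff (n - 1 - (j : ℕ))) = u := by
  ext k
  rw [coeff_phiP]
  split_ifs with h
  · congr 1; simp only [Fin.val_mk]; omega
  · exact (coeff_eq_zero_of_degree_lt (lt_of_lt_of_le hu (by simp only [Nat.cast_withBot]; exact WithBot.coe_le_coe.mpr (by omega)))).symm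

lemma phiP_zero (n : ℕ) : phiP n 0 = 0 := by
  simp [phiP]




lemma key (n : ℕ) (a : ℝ[X]) (c : Fin n → ℝ) (i : ℕ) (hi : i < 2 * n) :
    ∑ j : Fin n, (if i ≤ n + (j : ℕ) then a.coeff (n + j - i) else 0) * c j
      = (phiP n c * a).coeff (2 * n - 1 - i) := by
  unfold phiP
  rw [Finset.sum_mul, finset_sum_coeff]
  apply Finset.sum_congr rfl
  intro j _
  have hj := j.isLt
  rw [mul_right_comm, coeff_mul_X_pow', coeff_C_mul]
  by_cases h : i ≤ n + (j : ℕ)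
  · rw [if_pos h, if_pos (by omega)]
    have he : 2 * n - 1 - i - (n - 1 - (j : ℕ)) = n + (j : ℕ) - i := by omega
    rw [he, mul_comm]
  · rw [if_neg h, if_neg (by omega), zero_mul]

lemma mulVec_topBlock (n : ℕ) (a : ℝ[X]) (c : Fin n → ℝ) (i : Fin n) :
    (topBlock n a).mulVec c i = (phiP n c * a).coeff (2 * n - 1 - (i : ℕ)) := by
  simp only [Matrix.mulVec, dotProduct, topBlock, Tmat]
  exact key n a c i (by have := i.isLt; omega)

lemma mulVec_botBlock (n : ℕ) (a : ℝ[X]) (c : Fin n → ℝ) (i : Fin n) :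
    (botBlock n a).mulVec c i = (phiP n c * a).coeff (n - 1 - (i : ℕ)) := by
  have hi := i.isLt
  have h := key n a c (n + i) (by omega)
  have he : 2 * n - 1 - (n + (i : ℕ)) = n - 1 - (i : ℕ) := by omega
  rw [he] at h
  simp only [Matrix.mulVec, dotProduct, botBlock, Tmat]
  exact h

lemma coeff_phiP_rev (n : ℕ) (c : Fin n → ℝ) (j : Fin n) :
    (phiP n c).coeff (n - 1 - (j : ℕ)) = c j := by
  have hj := j.isLt
  rw [coeff_phiP, dif_pos (by omega)]
  congr 1
  exact Fin.ext (by simp only [Fin.val_mk]; omega)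

lemma coeff_mul_hi (n : ℕ) (u a : ℝ[X]) (hu : u.degree < (n : ℕ))
    (ha : a.degree ≤ (n : ℕ)) (k : ℕ) (hk : 2 * n ≤ k) : (u * a).coeff k = 0 := by
  apply coeff_eq_zero_of_degree_lt
  apply lt_of_le_of_lt (degree_mul_le u a)
  rcases eq_or_ne u 0 with rfl | hu0
  · simp only [degree_zero, WithBot.bot_add, Nat.cast_withBot]
    exact WithBot.bot_lt_coe k
  rcases eq_or_ne a 0 with rfl | ha0
  · simp only [degree_zero, WithBot.add_bot, Nat.cast_withBot]
    exact WithBot.bot_lt_coe k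
  have h1 : u.natDegree < n := (natDegree_lt_iff_degree_lt hu0).mpr hu
  have h2 : a.natDegree ≤ n := natDegree_le_iff_degree_le.mpr ha
  rw [degree_eq_natDegree hu0, degree_eq_natDegree ha0]
  simp only [Nat.cast_withBot, ← WithBot.coe_add]
  exact WithBot.coe_lt_coe.mpr (by omega)

lemma kernel_iff (n : ℕ) (p q : ℝ[X]) (hp : p.degree ≤ (n : ℕ)) (hq : q.degree ≤ (n : ℕ)) :
    (∃ w : Fin n ⊕ Fin n → ℝ, w ≠ 0 ∧
      (Matrix.fromBlocks (topBlock n p) (topBlock n q) (botBlock n p)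
        (botBlock n q)).mulVec w = 0) ↔
    ∃ u v : ℝ[X], u.degree < (n : ℕ) ∧ v.degree < (n : ℕ) ∧ ¬(u = 0 ∧ v = 0) ∧
      u * p + v * q = 0 := by
  constructor
  · rintro ⟨w, hw, hmul⟩
    set c : Fin n → ℝ := fun i => w (Sum.inl i) with hcdef
    set c' : Fin n → ℝ := fun i => w (Sum.inr i) with hcdef'
    have hwe : w = Sum.elim c c' := by funext s; cases s <;> rfl
    rw [hwe, Matrix.fromBlocks_mulVec] at hmul
    have htop : ∀ i : Fin n,
        (phiP n c * p).coeff (2 * n - 1 - (i : ℕ)) +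
          (phiP n c' * q).coeff (2 * n - 1 - (i : ℕ)) = 0 := by
      intro i
      have h := congrFun hmul (Sum.inl i)
      simpa [mulVec_topBlock] using h
    have hbot : ∀ i : Fin n,
        (phiP n c * p).coeff (n - 1 - (i : ℕ)) +
          (phiP n c' * q).coeff (n - 1 - (i : ℕ)) = 0 := by
      intro i
      have h := congrFun hmul (Sum.inr i)
      simpa [mulVec_botBlock] using h
    refine ⟨phiP n c, phiP n c', degree_phiP_lt n c, degree_phiP_lt n c', ?_, ?_⟩
    · rintro ⟨h1, h2⟩
      apply hw
      rw [hwe]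
      have hc0 : c = 0 := by
        funext j
        have h3 := coeff_phiP_rev n c j
        rw [h1, coeff_zero] at h3
        exact h3.symm
      have hc0' : c' = 0 := by
        funext j
        have h3 := coeff_phiP_rev n c' j
        rw [h2, coeff_zero] at h3
        exact h3.symm
      rw [hc0, hc0']
      funext s
      cases s <;> rfl
    · ext k
      rw [coeff_add, coeff_zero]
      by_cases hk : k < 2 * n
      · by_cases hk2 : n ≤ k
        · have h := htop ⟨2 * n - 1 - k, by omega⟩
          simp only [Fin.val_mk] at h
          have he : 2 * n - 1 - (2 * n - 1 - k) = k := by omega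
          rwa [he] at h
        · have h := hbot ⟨n - 1 - k, by omega⟩
          simp only [Fin.val_mk] at h
          have he : n - 1 - (n - 1 - k) = k := by omega
          rwa [he] at h
      · rw [coeff_mul_hi n _ p (degree_phiP_lt n c) hp k (by omega),
          coeff_mul_hi n _ q (degree_phiP_lt n c') hq k (by omega), add_zero]
  · rintro ⟨u, v, hu, hv, hnz, heq⟩
    set c : Fin n → ℝ := fun j => u.coeff (n - 1 - (j : ℕ)) with hcdef
    set c' : Fin n → ℝ := fun j => v.coeff (n - 1 - (j : ℕ)) with hcdef'
    have hcu : phiP n c = u := phiP_eq n u hu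
    have hcv : phiP n c' = v := phiP_eq n v hv
    refine ⟨Sum.elim c c', ?_, ?_⟩
    · intro h
      apply hnz
      have hc : c = 0 := funext fun j => congrFun h (Sum.inl j)
      have hc' : c' = 0 := funext fun j => congrFun h (Sum.inr j)
      constructor
      · rw [← hcu, hc, phiP_zero]
      · rw [← hcv, hc', phiP_zero]
    · have hsum : phiP n c * p + phiP n c' * q = 0 := by rw [hcu, hcv]; exact heq
      rw [Matrix.fromBlocks_mulVec]
      funext s
      cases s with
      | inl i =>
        show ((topBlock n p).mulVec c + (topBlock n q).mulVec c') i = 0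
        rw [Pi.add_apply, mulVec_topBlock, mulVec_topBlock, ← coeff_add, hsum, coeff_zero]
      | inr i =>
        show ((botBlock n p).mulVec c + (botBlock n q).mulVec c') i = 0
        rw [Pi.add_apply, mulVec_botBlock, mulVec_botBlock, ← coeff_add, hsum, coeff_zero]

lemma coprime_iff (n : ℕ) (p q : ℝ[X]) (hp : p.degree = (n : ℕ)) (_hq0 : q ≠ 0)
    (hq : q.degree ≤ (n : ℕ)) :
    (∃ u v : ℝ[X], u.degree < (n : ℕ) ∧ v.degree < (n : ℕ) ∧ ¬(u = 0 ∧ v = 0) ∧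
      u * p + v * q = 0) ↔ ¬ IsCoprime p q := by
  have hp0 : p ≠ 0 := by
    intro h
    rw [h, degree_zero] at hp
    exact absurd hp.symm (by simp [Nat.cast_withBot])
  constructor
  · rintro ⟨u, v, hu, hv, hnz, heq⟩ hco
    have hdvd : p ∣ v * q := ⟨-u, by linear_combination heq⟩
    have hv0 : v = 0 :=
      eq_zero_of_dvd_of_degree_lt (hco.dvd_of_dvd_mul_right hdvd) (by rw [hp]; exact hv)
    have hu0 : u = 0 := by
      rw [hv0, zero_mul, add_zero] at heq
      rcases mul_eq_zero.mp heq with h | h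
      · exact h
      · exact absurd h hp0
    exact hnz ⟨hu0, hv0⟩
  · intro hco
    classical
    set d := EuclideanDomain.gcd p q with hd
    have hdu : ¬ IsUnit d := fun h => hco (EuclideanDomain.gcd_isUnit_iff.mp h)
    have hd0 : d ≠ 0 := fun h => hp0 ((EuclideanDomain.gcd_eq_zero_iff.mp h).1)
    have hdp : d ∣ p := EuclideanDomain.gcd_dvd_left p q
    have hdq : d ∣ q := EuclideanDomain.gcd_dvd_right p q
    have hdpos : 0 < d.natDegree :=
      natDegree_pos_iff_degree_pos.mpr (degree_pos_of_ne_zero_of_nonunit hd0 hdu)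
    have hpd : d * (p / d) = p := EuclideanDomain.mul_div_cancel' hd0 hdp
    have hqd : d * (q / d) = q := EuclideanDomain.mul_div_cancel' hd0 hdq
    have hpd0 : p / d ≠ 0 := fun h => hp0 (by rw [← hpd, h, mul_zero])
    have hnp : p.natDegree = n := natDegree_eq_of_degree_eq_some hp
    have hnd1 : (p / d).natDegree < n := by
      have h := natDegree_mul hd0 hpd0
      rw [hpd, hnp] at h
      omega
    have hnq : q.natDegree ≤ n := natDegree_le_iff_degree_le.mpr hq
    have hnd2 : (q / d).natDegree < n := by
      rcases eq_or_ne (q / d) 0 with h | h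
      · rw [h, natDegree_zero]; omega
      · have h2 := natDegree_mul hd0 h
        rw [hqd] at h2
        omega
    have hdeg1 : (p / d).degree < (n : ℕ) :=
      lt_of_le_of_lt degree_le_natDegree
        (by simp only [Nat.cast_withBot]; exact WithBot.coe_lt_coe.mpr hnd1)
    have hdeg2 : (q / d).degree < (n : ℕ) :=
      lt_of_le_of_lt degree_le_natDegree
        (by simp only [Nat.cast_withBot]; exact WithBot.coe_lt_coe.mpr hnd2)
    refine ⟨q / d, -(p / d), hdeg2, by rwa [degree_neg], ?_, ?_⟩
    · rintro ⟨h1, h2⟩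
      exact hpd0 (neg_eq_zero.mp h2)
    · linear_combination (p / d) * hqd - (q / d) * hpd

lemma degree_pX (n : ℕ) (x : Fin n → ℝ) : (pX x).degree = (n : ℕ) := by
  unfold pX
  rw [degree_add_eq_left_of_degree_lt, degree_X_pow]
  rw [degree_X_pow]
  apply lt_of_le_of_lt (degree_sum_le _ _)
  refine (Finset.sup_lt_iff (WithBot.bot_lt_coe n)).mpr ?_
  intro j _
  refine lt_of_le_of_lt (degree_C_mul_X_pow_le _ _) ?_
  simp only [Nat.cast_withBot]
  exact WithBot.coe_lt_coe.mpr j.isLt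

theorem Delta_invertible_iff_coprime (n : ℕ) (Np : ℝ[X])
    (hdeg : Np.degree ≤ n) (h0 : Np.eval 0 ≠ 0) (x : Fin n → ℝ) :
    IsUnit (topBlock n (pX x) - topBlock n Np * (botBlock n Np)⁻¹ * botBlock n (pX x)) ↔
      IsCoprime (pX x) Np := by
  classical
  set p := pX x with hpdef
  have hpdeg : p.degree = (n : ℕ) := degree_pX n x
  have hppoly : p.degree ≤ (n : ℕ) := le_of_eq hpdeg
  have hNp0 : Np ≠ 0 := fun h => h0 (by simp [h])
  have hc0 : Np.coeff 0 ≠ 0 := by rwa [coeff_zero_eq_eval_zero]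
  have htri : (botBlock n Np).BlockTriangular id := by
    intro i j hij
    have hij' : (j : ℕ) < (i : ℕ) := hij
    simp only [botBlock, Tmat]
    rw [if_neg (by omega)]
  have hdetP2 : (botBlock n Np).det = Np.coeff 0 ^ n := by
    rw [Matrix.det_of_upperTriangular htri]
    have hdiag : ∀ i : Fin n, botBlock n Np i i = Np.coeff 0 := by
      intro i
      simp only [botBlock, Tmat]
      rw [if_pos (le_refl _)]
      congr 1
      omega
    rw [Finset.prod_congr rfl (fun i _ => hdiag i), Finset.prod_const, Finset.card_univ,
      Fintype.card_fin]
  have hP2unit : IsUnit (botBlock n Np).det := by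
    rw [hdetP2]
    exact isUnit_iff_ne_zero.mpr (pow_ne_zero _ hc0)
  have hP2ne : (botBlock n Np).det ≠ 0 := by
    rw [hdetP2]; exact pow_ne_zero _ hc0
  haveI : Invertible (botBlock n Np) := (botBlock n Np).invertibleOfIsUnitDet hP2unit
  have hBdet := Matrix.det_fromBlocks₂₂ (topBlock n p) (topBlock n Np) (botBlock n p)
    (botBlock n Np)
  rw [Matrix.invOf_eq_nonsing_inv] at hBdet
  have hker := (kernel_iff n p Np hppoly hdeg).trans (coprime_iff n p Np hpdeg hNp0 hdeg)
  have hdet0 : (Matrix.fromBlocks (topBlock n p) (topBlock n Np) (botBlock n p)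
      (botBlock n Np)).det = 0 ↔ ¬ IsCoprime p Np :=
    Matrix.exists_mulVec_eq_zero_iff.symm.trans hker
  rw [Matrix.isUnit_iff_isUnit_det, isUnit_iff_ne_zero]
  constructor
  · intro h
    by_contra hco
    have : (Matrix.fromBlocks (topBlock n p) (topBlock n Np) (botBlock n p)
        (botBlock n Np)).det = 0 := hdet0.mpr hco
    rw [hBdet] at this
    rcases mul_eq_zero.mp this with h1 | h1
    · exact hP2ne h1
    · exact h h1
  · intro hco hdet
    apply hdet0.mp ?_ hco
    rw [hBdet, hdet, mul_zero]
end

section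
/- Let φ₁, ..., φ_m ∈ ℝⁿ and ψ₁, ..., ψ_m ∈ ℝ, and suppose there exists v ∈ ℝⁿ with φ_tᵀv = ψ_t for all t ∈ I, where I ⊆ {1,...,m}. Let x₀ ∈ ℝⁿ be such that φ_tᵀx₀ − ψ_t ≠ 0 for all t ∈ I, and let Φ = {x ∈ ℝⁿ : (φ_tᵀx₀ − ψ_t)(φ_tᵀx − ψ_t) > 0 for all t ∈ I}. Then Φ contains an open infinity-norm ball of radius 1, and consequently contains an integer point x* ∈ ℤⁿ. -/
theorem Phi_contains_ball_and_integer_point (n m : ℕ)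
    (φ : Fin m → (Fin n → ℝ)) (ψ : Fin m → ℝ) (I : Finset (Fin m))
    (v : Fin n → ℝ) (hv : ∀ t ∈ I, ∑ i, φ t i * v i = ψ t)
    (x₀ : Fin n → ℝ) (hx₀ : ∀ t ∈ I, ∑ i, φ t i * x₀ i - ψ t ≠ 0) :
    (∃ c : Fin n → ℝ,
      ∀ y : Fin n → ℝ, (∀ i, |y i - c i| < 1) →
        ∀ t ∈ I, (∑ i, φ t i * x₀ i - ψ t) * (∑ i, φ t i * y i - ψ t) > 0) ∧
    (∃ xs : Fin n → ℤ,
      ∀ t ∈ I, (∑ i, φ t i * x₀ i - ψ t) * (∑ i, φ t i * (xs i : ℝ) - ψ t) > 0) := by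
  set a : Fin m → ℝ := fun t => ∑ i, φ t i * x₀ i - ψ t with ha
  set R : ℝ := 1 + ∑ t ∈ I, (∑ i, |φ t i|) / |a t| with hR
  set c : Fin n → ℝ := fun i => v i + R * (x₀ i - v i) with hc
  have key : ∀ t ∈ I, ∀ y : Fin n → ℝ,
      ∑ i, φ t i * y i - ψ t = (∑ i, φ t i * (y i - c i)) + R * a t := by
    intro t ht y
    have h1 : a t = ∑ i, φ t i * (x₀ i - v i) := by
      rw [ha]
      simp only [← hv t ht, ← Finset.sum_sub_distrib, mul_sub]
    rw [h1, Finset.mul_sum, ← Finset.sum_add_distrib, ← hv t ht,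
      ← Finset.sum_sub_distrib]
    apply Finset.sum_congr rfl
    intro i _
    simp only [hc]
    ring
  have hRS : ∀ t ∈ I, (∑ i, |φ t i|) < R * |a t| := by
    intro t ht
    have hat : |a t| > 0 := abs_pos.mpr (hx₀ t ht)
    have h2 : (∑ i, |φ t i|) / |a t| ≤ ∑ s ∈ I, (∑ i, |φ s i|) / |a s| := by
      apply Finset.single_le_sum (f := fun s => (∑ i, |φ s i|) / |a s|) _ ht
      intro s _
      positivity
    have : (∑ i, |φ t i|) / |a t| * |a t| ≤ (∑ s ∈ I, (∑ i, |φ s i|) / |a s|) * |a t| :=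
      mul_le_mul_of_nonneg_right h2 hat.le
    rw [div_mul_cancel₀ _ (ne_of_gt hat)] at this
    calc (∑ i, |φ t i|) ≤ (∑ s ∈ I, (∑ i, |φ s i|) / |a s|) * |a t| := this
      _ < R * |a t| := by
          rw [hR]; nlinarith
  have main : ∀ y : Fin n → ℝ, (∀ i, |y i - c i| < 1) →
      ∀ t ∈ I, a t * (∑ i, φ t i * y i - ψ t) > 0 := by
    intro y hy t ht
    rw [key t ht y]
    have hE : |∑ i, φ t i * (y i - c i)| ≤ ∑ i, |φ t i| := by
      calc |∑ i, φ t i * (y i - c i)| ≤ ∑ i, |φ t i * (y i - c i)| :=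
            Finset.abs_sum_le_sum_abs _ _
        _ ≤ ∑ i, |φ t i| := by
            apply Finset.sum_le_sum
            intro i _
            rw [abs_mul]
            calc |φ t i| * |y i - c i| ≤ |φ t i| * 1 :=
                  mul_le_mul_of_nonneg_left (hy i).le (abs_nonneg _)
              _ = |φ t i| := mul_one _
    have hlt : |∑ i, φ t i * (y i - c i)| < R * |a t| := lt_of_le_of_lt hE (hRS t ht)
    have hat : |a t| > 0 := abs_pos.mpr (hx₀ t ht)
    set E := ∑ i, φ t i * (y i - c i)
    have h1 : a t * E ≥ -(|a t| * |E|) := by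
      rw [← abs_mul]; exact neg_abs_le _
    have h2 : |a t| * |E| < |a t| * (R * |a t|) :=
      mul_lt_mul_of_pos_left hlt hat
    have h3 : a t * (R * a t) = |a t| * (R * |a t|) := by
      rcases abs_cases (a t) with ⟨h, _⟩ | ⟨h, _⟩ <;> rw [h] <;> ring
    nlinarith [h1, h2, h3]
  constructor
  · exact ⟨c, main⟩
  · refine ⟨fun i => ⌊c i⌋, ?_⟩
    have hfl : ∀ i, |((⌊c i⌋ : ℤ) : ℝ) - c i| < 1 := by
      intro i
      rw [abs_sub_comm, abs_of_nonneg (by linarith [Int.floor_le (c i)])]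
      linarith [Int.sub_one_lt_floor (c i)]
    exact main (fun i => ((⌊c i⌋ : ℤ) : ℝ)) hfl
end

section
/- Consider the discrete-time system x_{k+1} = x_k + Δ(x_k)u_k on ℝⁿ, where for each x in a compact set Ω the matrix Δ(x) ∈ ℝ^{n×n} is invertible and x ↦ Δ(x)⁻¹ is continuous. Let Ω be the line segment from x₀ to x*, σ = max_{x∈Ω} ‖Δ(x)⁻¹‖₁, and fix μ ∈ (0,1). Define the feedback u_k = Δ(x_k)⁻¹(x* − x_k) if ‖Δ(x_k)⁻¹(x* − x_k)‖₁ < 1, and u_k = μ·Δ(x_k)⁻¹(x* − x_k)/‖Δ(x_k)⁻¹(x* − x_k)‖₁ otherwise. Then x_k ∈ Ω for all k, ‖u_k‖₁ < 1 for all k, and x_T = x* for some T ≤ ⌈(σ/μ)·‖x* − x₀‖₁⌉. -/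
/-- Vector 1-norm on `Fin n → ℝ`. -/
noncomputable def vnorm {n : ℕ} (v : Fin n → ℝ) : ℝ := ∑ i, |v i|

/-- The feedback input `u(x)` driving the state toward `xs`. -/
noncomputable def feedback {n : ℕ} (Δ : (Fin n → ℝ) → Matrix (Fin n) (Fin n) ℝ)
    (xs : Fin n → ℝ) (μ : ℝ) (x : Fin n → ℝ) : Fin n → ℝ :=
  if vnorm ((Δ x)⁻¹.mulVec (xs - x)) < 1 then (Δ x)⁻¹.mulVec (xs - x)
  else (μ / vnorm ((Δ x)⁻¹.mulVec (xs - x))) • (Δ x)⁻¹.mulVec (xs - x)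

lemma vnorm_nonneg {n : ℕ} (v : Fin n → ℝ) : 0 ≤ vnorm v :=
  Finset.sum_nonneg fun _ _ => abs_nonneg _

lemma vnorm_smul {n : ℕ} (c : ℝ) (v : Fin n → ℝ) : vnorm (c • v) = |c| * vnorm v := by
  simp [vnorm, abs_mul, Finset.mul_sum]

lemma vnorm_eq_zero {n : ℕ} {v : Fin n → ℝ} (h : vnorm v = 0) : v = 0 := by
  funext i
  have := (Finset.sum_eq_zero_iff_of_nonneg (fun i _ => abs_nonneg (v i))).mp h i
    (Finset.mem_univ i)
  simpa using this

lemma vnorm_pos {n : ℕ} {v : Fin n → ℝ} (h : v ≠ 0) : 0 < vnorm v :=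
  lt_of_le_of_ne (vnorm_nonneg v) fun hh => h (vnorm_eq_zero hh.symm)

lemma vnorm_mulVec_le {n : ℕ} (A : Matrix (Fin n) (Fin n) ℝ) (w : Fin n → ℝ) :
    vnorm (A.mulVec w) ≤ (⨆ j, ∑ i, |A i j|) * vnorm w := by
  have hC : ∀ j, ∑ i, |A i j| ≤ ⨆ j, ∑ i, |A i j| := fun j =>
    le_ciSup (f := fun j => ∑ i, |A i j|) (Set.finite_range _).bddAbove j
  calc vnorm (A.mulVec w) = ∑ i, |∑ j, A i j * w j| := by
        simp [vnorm, Matrix.mulVec, dotProduct]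
    _ ≤ ∑ i, ∑ j, |A i j * w j| :=
        Finset.sum_le_sum fun i _ => Finset.abs_sum_le_sum_abs _ _
    _ = ∑ j, (∑ i, |A i j|) * |w j| := by
        rw [Finset.sum_comm]; simp [abs_mul, Finset.sum_mul]
    _ ≤ ∑ j, (⨆ j, ∑ i, |A i j|) * |w j| :=
        Finset.sum_le_sum fun j _ => mul_le_mul_of_nonneg_right (hC j) (abs_nonneg _)
    _ = (⨆ j, ∑ i, |A i j|) * vnorm w := by rw [vnorm, Finset.mul_sum]

theorem finite_time_reaching (n : ℕ)
    (Δ : (Fin n → ℝ) → Matrix (Fin n) (Fin n) ℝ)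
    (x₀ xs : Fin n → ℝ)
    (hinv : ∀ x ∈ segment ℝ x₀ xs, IsUnit (Δ x).det)
    (hcont : ContinuousOn (fun x => (Δ x)⁻¹) (segment ℝ x₀ xs))
    (σ : ℝ)
    (hσ : IsGreatest {s : ℝ | ∃ x ∈ segment ℝ x₀ xs, s = ⨆ j, ∑ i, |(Δ x)⁻¹ i j|} σ)
    (μ : ℝ) (hμ : μ ∈ Set.Ioo (0 : ℝ) 1)
    (x : ℕ → Fin n → ℝ) (hx0 : x 0 = x₀)
    (hrec : ∀ k, x (k + 1) = x k + (Δ (x k)).mulVec (feedback Δ xs μ (x k))) :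
    (∀ k, x k ∈ segment ℝ x₀ xs) ∧
    (∀ k, vnorm (feedback Δ xs μ (x k)) < 1) ∧
    ∃ T ≤ ⌈σ / μ * vnorm (xs - x₀)⌉₊, x T = xs := by
  obtain ⟨hμ0, hμ1⟩ := hμ
  -- The one-step lemma
  have step : ∀ k, x k ∈ segment ℝ x₀ xs → ∃ θ : ℝ, 0 < θ ∧ θ ≤ 1 ∧
      x (k + 1) = x k + θ • (xs - x k) ∧
      (θ = 1 ∨ (0 < σ ∧ μ / σ ≤ θ * vnorm (xs - x k))) := by
    intro k hk
    have hdet := hinv _ hk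
    have hid : (Δ (x k)).mulVec ((Δ (x k))⁻¹.mulVec (xs - x k)) = xs - x k := by
      rw [Matrix.mulVec_mulVec, Matrix.mul_nonsing_inv _ hdet, Matrix.one_mulVec]
    by_cases hv : vnorm ((Δ (x k))⁻¹.mulVec (xs - x k)) < 1
    · refine ⟨1, one_pos, le_refl 1, ?_, Or.inl rfl⟩
      rw [hrec k, one_smul]
      simp only [feedback, if_pos hv, hid]
    · have hv1 : 1 ≤ vnorm ((Δ (x k))⁻¹.mulVec (xs - x k)) := not_lt.mp hv
      have hvpos : 0 < vnorm ((Δ (x k))⁻¹.mulVec (xs - x k)) := lt_of_lt_of_le one_pos hv1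
      have hC : (⨆ j, ∑ i, |(Δ (x k))⁻¹ i j|) ≤ σ := hσ.2 ⟨x k, hk, rfl⟩
      have hb : vnorm ((Δ (x k))⁻¹.mulVec (xs - x k)) ≤ σ * vnorm (xs - x k) :=
        le_trans (vnorm_mulVec_le _ _)
          (mul_le_mul_of_nonneg_right hC (vnorm_nonneg _))
      have hd : 0 < vnorm (xs - x k) := by
        rcases (vnorm_nonneg (xs - x k)).lt_or_eq with h | h
        · exact h
        · rw [← h, mul_zero] at hb; linarith
      have hσp : 0 < σ := by nlinarith
      refine ⟨μ / vnorm ((Δ (x k))⁻¹.mulVec (xs - x k)), div_pos hμ0 hvpos, ?_, ?_,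
        Or.inr ⟨hσp, ?_⟩⟩
      · rw [div_le_one hvpos]; linarith
      · rw [hrec k]
        simp only [feedback, if_neg hv, Matrix.mulVec_smul, hid]
      · rw [div_mul_eq_mul_div, div_le_div_iff₀ hσp hvpos]
        nlinarith
  -- The segment invariant
  have hseg : ∀ k, x k ∈ segment ℝ x₀ xs := by
    intro k
    induction k with
    | zero => rw [hx0]; exact left_mem_segment ℝ x₀ xs
    | succ k ih =>
      obtain ⟨θ, hθ0, hθ1, hstep, -⟩ := step k ih
      have hx1 : x (k + 1) = (1 - θ) • x k + θ • xs := by rw [hstep]; module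
      rw [hx1]
      exact (convex_segment x₀ xs).segment_subset ih (right_mem_segment ℝ x₀ xs)
        ⟨1 - θ, θ, by linarith, hθ0.le, by ring, rfl⟩
  refine ⟨hseg, ?_, ?_⟩
  · -- norm of feedback < 1
    intro k
    by_cases hv : vnorm ((Δ (x k))⁻¹.mulVec (xs - x k)) < 1
    · simpa only [feedback, if_pos hv] using hv
    · have hv1 : 1 ≤ vnorm ((Δ (x k))⁻¹.mulVec (xs - x k)) := not_lt.mp hv
      have hvpos : 0 < vnorm ((Δ (x k))⁻¹.mulVec (xs - x k)) := lt_of_lt_of_le one_pos hv1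
      simp only [feedback, if_neg hv, vnorm_smul, abs_of_pos (div_pos hμ0 hvpos)]
      rw [div_mul_cancel₀ _ (ne_of_gt hvpos)]
      exact hμ1
  · -- finite-time reaching
    by_contra hT
    push_neg at hT
    set N := ⌈σ / μ * vnorm (xs - x₀)⌉₊ with hN
    have h0 : x 0 ≠ xs := hT 0 (Nat.zero_le _)
    have hne0 : xs - x₀ ≠ 0 := by
      rw [← hx0]; exact sub_ne_zero.mpr (Ne.symm h0)
    have hdet0 := hinv x₀ (left_mem_segment ℝ x₀ xs)
    have hw0 : (Δ x₀)⁻¹.mulVec (xs - x₀) ≠ 0 := by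
      intro hh
      apply hne0
      have : (Δ x₀).mulVec ((Δ x₀)⁻¹.mulVec (xs - x₀)) = xs - x₀ := by
        rw [Matrix.mulVec_mulVec, Matrix.mul_nonsing_inv _ hdet0, Matrix.one_mulVec]
      rw [hh, Matrix.mulVec_zero] at this
      exact this.symm
    have hv0 : 0 < vnorm ((Δ x₀)⁻¹.mulVec (xs - x₀)) := vnorm_pos hw0
    have hb0 : vnorm ((Δ x₀)⁻¹.mulVec (xs - x₀)) ≤ σ * vnorm (xs - x₀) :=
      le_trans (vnorm_mulVec_le _ _)
        (mul_le_mul_of_nonneg_right (hσ.2 ⟨x₀, left_mem_segment ℝ x₀ xs, rfl⟩)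
          (vnorm_nonneg _))
    have hd0 : 0 < vnorm (xs - x₀) := vnorm_pos hne0
    have hσp : 0 < σ := by nlinarith
    have key : ∀ k, k ≤ N → (k : ℝ) * (μ / σ) ≤ vnorm (xs - x₀) - vnorm (xs - x k) := by
      intro k
      induction k with
      | zero => intro _; rw [hx0]; norm_num
      | succ k ih =>
        intro hk1
        have ihk := ih (Nat.le_of_succ_le hk1)
        obtain ⟨θ, hθ0, hθ1, hstep, hor⟩ := step k (hseg k)
        rcases hor with h1 | ⟨-, hbound⟩
        · exfalso
          apply hT (k + 1) hk1
          rw [hstep, h1, one_smul]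
          abel
        · have hnext : xs - x (k + 1) = (1 - θ) • (xs - x k) := by rw [hstep]; module
          have hdnext : vnorm (xs - x (k + 1)) = (1 - θ) * vnorm (xs - x k) := by
            rw [hnext, vnorm_smul, abs_of_nonneg (by linarith)]
          push_cast
          nlinarith [vnorm_nonneg (xs - x k)]
    have hNN := key N (le_refl N)
    have hdN : 0 < vnorm (xs - x N) :=
      vnorm_pos (sub_ne_zero.mpr (Ne.symm (hT N (le_refl N))))
    have hceil : σ / μ * vnorm (xs - x₀) ≤ (N : ℝ) := Nat.le_ceil _
    have h1 : (N : ℝ) * μ ≤ (vnorm (xs - x₀) - vnorm (xs - x N)) * σ := by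
      rw [← mul_div_assoc] at hNN
      exact (div_le_iff₀ hσp).mp hNN
    have h2 : σ * vnorm (xs - x₀) ≤ (N : ℝ) * μ := by
      rw [div_mul_eq_mul_div] at hceil
      exact (div_le_iff₀ hμ0).mp hceil
    nlinarith
end
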